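/- The only prefixes of the infinite Tribonacci word that are (integer) powers are those of length 2·T_n for n ≥ 5; i.e., the prefix T[0..m-1] can be written as x^k for some word x and integer k ≥ 2 if and only if m = 2T_n for some n ≥ 5. -/

import Mathlib

/-- The Tribonacci morphism: 0 → 01, 1 → 02, 2 → 0. -/
def tribMap (c : ℕ) : List ℕ := if c = 0 then [0,1] else if c = 1 then [0,2] else [0]

/-- Iterates of the Tribonacci morphism on the word `0`. -/
def tribIter : ℕ → List ℕ
  | 0 => [0]
  | k+1 => (tribIter k).flatMap tribMap

/-- The infinite Tribonacci word, the fixed point starting with 0 of 0→01, 1→02, 2→0. -/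
def tribWord (n : ℕ) : ℕ := (tribIter (n+1)).getD n 0

/-- The Tribonacci numbers. -/
def trib : ℕ → ℕ
  | 0 => 0
  | 1 => 1
  | 2 => 1
  | n+3 => trib (n+2) + trib (n+1) + trib n


-- A. basic trib facts
lemma trib_pos : ∀ n, 1 ≤ n → 1 ≤ trib n := by
  intro n hn
  induction n using Nat.strong_induction_on with
  | _ n ih =>
    match n, hn with
    | 1, _ => decide
    | 2, _ => decide
    | (k+3), _ =>
      have := ih (k+2) (by omega) (by omega)
      simp [trib]; omega

lemma trib_add_two_ge : ∀ n, n + 1 ≤ trib (n + 2) := by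
  intro n
  induction n with
  | zero => decide
  | succ k ih =>
    have h1 : 1 ≤ trib (k+1) ∨ k = 0 := by
      rcases Nat.eq_zero_or_pos k with h|h
      · right; exact h
      · left; exact trib_pos _ (by omega)
    show k + 2 ≤ trib (k + 3)
    have : trib (k+3) = trib (k+2) + trib (k+1) + trib k := rfl
    rcases h1 with h|h
    · omega
    · subst h; decide

-- B. tribIter lemmas
lemma tribIter_append (k : ℕ) :
    tribIter (k+3) = tribIter (k+2) ++ tribIter (k+1) ++ tribIter k := by
  induction k with
  | zero => decide
  | succ n ih =>
    calc tribIter (n+4) = (tribIter (n+3)).flatMap tribMap := rfl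
      _ = (tribIter (n+2) ++ tribIter (n+1) ++ tribIter n).flatMap tribMap := by rw [ih]
      _ = tribIter (n+3) ++ tribIter (n+2) ++ tribIter (n+1) := by
            rw [List.flatMap_append, List.flatMap_append]; rfl

lemma length_tribIter : ∀ k, (tribIter k).length = trib (k+2) := by
  intro k
  induction k using Nat.strong_induction_on with
  | _ k ih =>
    match k with
    | 0 => decide
    | 1 => decide
    | 2 => decide
    | (n+3) =>
      rw [tribIter_append]
      simp only [List.length_append]
      rw [ih (n+2) (by omega), ih (n+1) (by omega), ih n (by omega)]
      rfl

lemma tribIter_prefix (k : ℕ) : tribIter k <+: tribIter (k+1) := by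
  induction k with
  | zero => exact ⟨[1], rfl⟩
  | succ n ih =>
    obtain ⟨t, ht⟩ := ih
    refine ⟨t.flatMap tribMap, ?_⟩
    have h2 : tribIter (n+2) = (tribIter n ++ t).flatMap tribMap := by rw [ht]; rfl
    rw [h2, List.flatMap_append]
    rfl

lemma tribIter_prefix_le {k l : ℕ} (h : k ≤ l) : tribIter k <+: tribIter l := by
  induction l with
  | zero => simp [Nat.le_zero.mp h]
  | succ n ih =>
    rcases Nat.lt_or_ge k (n+1) with h'|h'
    · exact (ih (by omega)).trans (tribIter_prefix n)
    · have : k = n + 1 := by omega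
      subst this; exact List.prefix_refl _

lemma mem_tribIter {a k : ℕ} (h : a ∈ tribIter k) : a = 0 ∨ a = 1 ∨ a = 2 := by
  induction k generalizing a with
  | zero => simp [tribIter] at h; omega
  | succ n ih =>
    simp only [tribIter, List.mem_flatMap] at h
    obtain ⟨b, hb, ha⟩ := h
    rcases ih hb with rfl|rfl|rfl <;> simp [tribMap] at ha <;> omega

-- C. Pref / Lf machinery
def Pref (a : ℕ) : List ℕ := (List.range a).map tribWord

def Lf (a : ℕ) : ℕ := ((Pref a).flatMap tribMap).length

lemma getD_of_prefix {l₁ l₂ : List ℕ} (h : l₁ <+: l₂) {n : ℕ} (hn : n < l₁.length) :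
    l₂.getD n 0 = l₁.getD n 0 := by
  obtain ⟨t, rfl⟩ := h
  rw [List.getD_eq_getElem _ _ hn, List.getD_eq_getElem _ _ (by simp; omega),
    List.getElem_append_left hn]

lemma tribWord_eq_getD {K n : ℕ} (h : n < (tribIter K).length) :
    tribWord n = (tribIter K).getD n 0 := by
  have hlen : n < (tribIter (n+1)).length := by
    rw [length_tribIter]; have := trib_add_two_ge (n+1); omega
  rcases Nat.le_total (n+1) K with hK|hK
  · exact (getD_of_prefix (tribIter_prefix_le hK) hlen).symm
  · exact (getD_of_prefix (tribIter_prefix_le hK) h)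

lemma length_Pref (a : ℕ) : (Pref a).length = a := by simp [Pref]

lemma getD_Pref {a i : ℕ} (h : i < a) : (Pref a).getD i 0 = tribWord i := by
  rw [Pref, List.getD_eq_getElem _ _ (by simpa using h)]
  simp

lemma Pref_eq_take {a K : ℕ} (h : a ≤ (tribIter K).length) :
    Pref a = (tribIter K).take a := by
  apply List.ext_getElem
  · simp [length_Pref, h]
  · intro i h1 h2
    have hi : i < a := by rwa [length_Pref] at h1
    have : (Pref a)[i] = tribWord i := by simp [Pref]
    rw [this, List.getElem_take, tribWord_eq_getD (K := K) (by omega),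
      List.getD_eq_getElem]

lemma Pref_prefix {a K : ℕ} (h : a ≤ (tribIter K).length) : Pref a <+: tribIter K := by
  rw [Pref_eq_take h]; exact List.take_prefix _ _

lemma prefix_eq_Pref {l : List ℕ} {K : ℕ} (h : l <+: tribIter K) : l = Pref l.length := by
  apply List.ext_getElem
  · simp [length_Pref]
  · intro i h1 h2
    have : l[i] = (tribIter K)[i]'(by have := h.length_le; omega) := h.getElem h1
    rw [this]
    simp only [Pref, List.getElem_map, List.getElem_range]
    rw [tribWord_eq_getD (K := K) (by have := h.length_le; omega), List.getD_eq_getElem]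

lemma flatMap_Pref (a : ℕ) : (Pref a).flatMap tribMap = Pref (Lf a) := by
  have hlen : a ≤ (tribIter (a+1)).length := by
    rw [length_tribIter]; have := trib_add_two_ge (a+1); omega
  obtain ⟨t, ht⟩ := Pref_prefix hlen
  have hpre : (Pref a).flatMap tribMap <+: tribIter (a+2) := by
    refine ⟨t.flatMap tribMap, ?_⟩
    have : tribIter (a+2) = (tribIter (a+1)).flatMap tribMap := rfl
    rw [this, ← ht, List.flatMap_append]
  simpa [Lf] using prefix_eq_Pref hpre

lemma Pref_succ (a : ℕ) : Pref (a+1) = Pref a ++ [tribWord a] := by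
  simp [Pref, List.range_succ]

lemma Lf_succ (a : ℕ) : Lf (a+1) = Lf a + (tribMap (tribWord a)).length := by
  simp [Lf, Pref_succ, List.flatMap_append]

lemma tribWord_mem3 (n : ℕ) : tribWord n = 0 ∨ tribWord n = 1 ∨ tribWord n = 2 := by
  have hlen : n < (tribIter (n+1)).length := by
    rw [length_tribIter]; have := trib_add_two_ge (n+1); omega
  have : tribWord n ∈ tribIter (n+1) := by
    rw [tribWord, List.getD_eq_getElem _ _ hlen]; exact List.getElem_mem _
  exact mem_tribIter this

lemma blocklen_pos (c : ℕ) : 1 ≤ (tribMap c).length := by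
  unfold tribMap; split
  · simp
  · split <;> simp

lemma blocklen_le (c : ℕ) : (tribMap c).length ≤ 2 := by
  unfold tribMap; split
  · simp
  · split <;> simp

lemma block_getD {e j : ℕ} (h : j < (tribMap (tribWord e)).length) :
    tribWord (Lf e + j) = (tribMap (tribWord e)).getD j 0 := by
  have key : Pref (Lf (e+1)) = Pref (Lf e) ++ tribMap (tribWord e) := by
    rw [← flatMap_Pref (e+1), Pref_succ, List.flatMap_append, flatMap_Pref e]
    simp
  have hlt : Lf e + j < Lf (e+1) := by rw [Lf_succ]; omega
  rw [← getD_Pref hlt, key, List.getD_append_right _ _ _ _ (by simp [length_Pref])]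
  simp [length_Pref]

-- D. letters, decoding, gaps
lemma tribWord_zero : tribWord 0 = 0 := by decide

lemma Lf_zero : Lf 0 = 0 := rfl

lemma first_letter (e : ℕ) : tribWord (Lf e) = 0 := by
  have h := block_getD (e := e) (j := 0) (blocklen_pos _)
  rcases tribWord_mem3 e with h0|h0|h0 <;> rw [h0] at h <;> simpa [tribMap] using h

lemma blocklen_eq (e : ℕ) :
    (tribMap (tribWord e)).length = if tribWord e = 2 then 1 else 2 := by
  rcases tribWord_mem3 e with h|h|h <;> simp [h, tribMap]

lemma Lf_lt_succ (e : ℕ) : Lf e < Lf (e+1) := by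
  rw [Lf_succ]; have := blocklen_pos (tribWord e); omega

lemma Lf_mono : StrictMono Lf := strictMono_nat_of_lt_succ Lf_lt_succ

lemma Lf_ge (e : ℕ) : e ≤ Lf e := Lf_mono.le_apply

lemma Lf_one : Lf 1 = 2 := by
  rw [show (1:ℕ) = 0 + 1 from rfl, Lf_succ, Lf_zero, tribWord_zero]
  simp [tribMap]

lemma Lf_ge_succ {e : ℕ} (h : 1 ≤ e) : e + 1 ≤ Lf e := by
  induction e with
  | zero => omega
  | succ n ih =>
    rcases Nat.eq_zero_or_pos n with rfl|hn
    · rw [Lf_one]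
    · have := ih hn
      have := Lf_lt_succ n
      omega

def dec (x : ℕ) : ℕ := if x = 1 then 0 else if x = 2 then 1 else 2

lemma dec_spec (e : ℕ) : tribWord e = dec (tribWord (Lf e + 1)) := by
  rcases tribWord_mem3 e with h|h|h
  · have hb := block_getD (e := e) (j := 1) (by rw [blocklen_eq, h]; simp)
    rw [h] at hb ⊢; simp [tribMap] at hb; rw [hb]; rfl
  · have hb := block_getD (e := e) (j := 1) (by rw [blocklen_eq, h]; simp)
    rw [h] at hb ⊢; simp [tribMap] at hb; rw [hb]; rfl
  · have h1 : Lf (e+1) = Lf e + 1 := by rw [Lf_succ, blocklen_eq, h]; simp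
    rw [h, ← h1, first_letter]; rfl

lemma exists_block (p : ℕ) : ∃ e, Lf e ≤ p ∧ p < Lf (e+1) := by
  induction p with
  | zero => exact ⟨0, by rw [Lf_zero], by rw [Lf_one]; omega⟩
  | succ p ih =>
    obtain ⟨e, h1, h2⟩ := ih
    rcases Nat.lt_or_ge (p+1) (Lf (e+1)) with h|h
    · exact ⟨e, by omega, h⟩
    · exact ⟨e+1, h, by have h3 := Lf_lt_succ (e+1); omega⟩

lemma interior_letter {e p : ℕ} (h1 : Lf e < p) (h2 : p < Lf (e+1)) :
    p = Lf e + 1 ∧ (tribWord p = 1 ∨ tribWord p = 2) ∧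
      (tribWord p = 2 → tribWord e = 1) := by
  have hb : Lf (e+1) = Lf e + (tribMap (tribWord e)).length := Lf_succ e
  have hbl := blocklen_le (tribWord e)
  have hp : p = Lf e + 1 := by omega
  have hlen : (tribMap (tribWord e)).length = 2 := by omega
  have hc := block_getD (e := e) (j := 1) (by omega)
  have hne : ¬ tribWord e = 2 := by
    intro hcon; rw [blocklen_eq, if_pos hcon] at hlen; omega
  rcases tribWord_mem3 e with h0|h0|h0
  · rw [h0] at hc; simp [tribMap] at hc
    refine ⟨hp, by rw [hp, hc]; left; rfl, ?_⟩
    rw [hp, hc]; omega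
  · rw [h0] at hc; simp [tribMap] at hc
    refine ⟨hp, by rw [hp, hc]; right; rfl, fun _ => h0⟩
  · exact absurd h0 hne

lemma zero_pos {p : ℕ} (h : tribWord p = 0) : ∃ e, p = Lf e := by
  obtain ⟨e, h1, h2⟩ := exists_block p
  rcases Nat.eq_or_lt_of_le h1 with heq|hlt
  · exact ⟨e, heq.symm⟩
  · obtain ⟨_, h3, _⟩ := interior_letter hlt h2
    omega

lemma no22 {q : ℕ} (h : tribWord q = 2) : tribWord (q+1) = 0 := by
  obtain ⟨e, h1, h2⟩ := exists_block q
  rcases Nat.eq_or_lt_of_le h1 with heq|hlt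
  · rw [← heq] at h; rw [first_letter] at h; omega
  · obtain ⟨hp, _, h4⟩ := interior_letter hlt h2
    have he1 : tribWord e = 1 := h4 h
    have : Lf (e+1) = Lf e + 2 := by rw [Lf_succ, blocklen_eq, he1]; simp
    have hq1 : q + 1 = Lf (e+1) := by omega
    rw [hq1, first_letter]

lemma gap2 (e : ℕ) : Lf e + 3 ≤ Lf (e+2) := by
  have h1 := Lf_succ e
  have h2 : Lf (e+2) = Lf (e+1) + (tribMap (tribWord (e+1))).length := Lf_succ (e+1)
  have b1 := blocklen_eq e
  have b2 := blocklen_eq (e+1)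
  by_cases hc : tribWord e = 2
  · have := no22 hc
    rw [if_pos hc] at b1; rw [if_neg (by omega)] at b2; omega
  · rw [if_neg hc] at b1
    have := blocklen_pos (tribWord (e+1)); omega

lemma gap4 (e : ℕ) : Lf e + 6 ≤ Lf (e+4) := by
  have h1 := gap2 e
  have h2 : Lf (e+2) + 3 ≤ Lf (e+4) := gap2 (e+2)
  omega

-- E. propagation lemma
lemma propg {e r : ℕ} (H : ∀ i, i < r → tribWord (Lf e + i) = tribWord i) :
    ∀ j, Lf j + 1 < r → Lf (e + j) = Lf e + Lf j ∧ tribWord (e + j) = tribWord j := by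
  intro j
  induction j with
  | zero =>
    intro hj
    refine ⟨by rw [Lf_zero]; rfl, ?_⟩
    have h1 : tribWord (Lf e + 1) = tribWord 1 := H 1 (by rw [Lf_zero] at hj; omega)
    calc tribWord (e + 0) = dec (tribWord (Lf e + 1)) := dec_spec e
      _ = dec (tribWord (Lf 0 + 1)) := by rw [Lf_zero, h1]
      _ = tribWord 0 := (dec_spec 0).symm
  | succ j ih =>
    intro hj
    have hmono : Lf j ≤ Lf (j+1) := le_of_lt (Lf_lt_succ j)
    obtain ⟨hL, hT⟩ := ih (by omega)
    have hL' : Lf (e + (j + 1)) = Lf e + Lf (j + 1) := by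
      have h1 : Lf (e + (j+1)) = Lf (e + j) + (tribMap (tribWord (e+j))).length :=
        Lf_succ (e + j)
      rw [h1, hT, hL, Lf_succ j]; ring
    refine ⟨hL', ?_⟩
    have h2 : tribWord (Lf e + (Lf (j+1) + 1)) = tribWord (Lf (j+1) + 1) :=
      H _ (by omega)
    calc tribWord (e + (j+1)) = dec (tribWord (Lf (e + (j+1)) + 1)) := dec_spec _
      _ = dec (tribWord (Lf (j+1) + 1)) := by
          rw [hL', Nat.add_assoc, h2]
      _ = tribWord (j+1) := (dec_spec _).symm

-- F. descent and classification
lemma n_descent {m : ℕ} (hm : 3 ≤ m)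
    (H : ∀ i, i < m - 1 → tribWord (m + i) = tribWord i) :
    ∃ e, 1 ≤ e ∧ e < m ∧ m = Lf e ∧
      ∀ j, j < e - 1 → tribWord (e + j) = tribWord j := by
  have h0 : tribWord m = 0 := by
    have := H 0 (by omega)
    rw [Nat.add_zero] at this
    rw [this, tribWord_zero]
  obtain ⟨e, he⟩ := zero_pos h0
  have he1 : 1 ≤ e := by
    rcases Nat.eq_zero_or_pos e with rfl|h
    · rw [Lf_zero] at he; omega
    · exact h
  have helt : e < m := by have := Lf_ge_succ he1; omega
  have H' : ∀ i, i < m - 1 → tribWord (Lf e + i) = tribWord i := by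
    intro i hi; rw [← he]; exact H i hi
  refine ⟨e, he1, helt, he, ?_⟩
  intro j hj
  have hj2 : j + 2 ≤ e := by omega
  have hgap : Lf j + 3 ≤ Lf (j + 2) := gap2 j
  have hmono : Lf (j+2) ≤ Lf e := Lf_mono.monotone (by omega)
  exact (propg H' j (by omega)).2

lemma Lf_trib (k : ℕ) : Lf (trib (k+2)) = trib (k+3) := by
  have h1 : tribIter k = Pref (trib (k+2)) := by
    have := prefix_eq_Pref (List.prefix_refl (tribIter k))
    rwa [length_tribIter] at this
  have h2 : Lf (trib (k+2)) = ((Pref (trib (k+2))).flatMap tribMap).length := rfl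
  rw [h2, ← h1]
  have h3 : (tribIter k).flatMap tribMap = tribIter (k+1) := rfl
  rw [h3, length_tribIter]

lemma nclass : ∀ m, 1 ≤ m → (∀ i, i < m - 1 → tribWord (m + i) = tribWord i) →
    ∃ n, 2 ≤ n ∧ m = trib n := by
  intro m
  induction m using Nat.strong_induction_on with
  | _ m ih =>
    intro hm H
    rcases Nat.lt_or_ge m 3 with h3|h3
    · interval_cases m
      · exact ⟨2, by omega, by decide⟩
      · exact ⟨3, by omega, by decide⟩
    · obtain ⟨e, he1, helt, heq, hN⟩ := n_descent h3 H
      obtain ⟨n, hn2, hne⟩ := ih e helt he1 hN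
      obtain ⟨kk, rfl⟩ : ∃ kk, n = kk + 2 := ⟨n - 2, by omega⟩
      exact ⟨kk + 3, by omega, by rw [heq, hne, Lf_trib]⟩

lemma square_list {t : ℕ} (h : ∀ i, i < t → tribWord (t + i) = tribWord i) :
    Pref (t + t) = Pref t ++ Pref t := by
  rw [Pref, List.range_add, List.map_append, List.map_map]
  congr 1
  apply List.map_congr_left
  intro a ha
  have := h a (List.mem_range.mp ha)
  simpa using this

lemma square_pointwise {t : ℕ} (h : Pref (t + t) = Pref t ++ Pref t) :
    ∀ i, i < t → tribWord (t + i) = tribWord i := by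
  intro i hi
  have h1 : tribWord (t + i) = (Pref (t+t)).getD (t+i) 0 := (getD_Pref (by omega)).symm
  rw [h, List.getD_append_right _ _ _ _ (by rw [length_Pref]; omega)] at h1
  rw [length_Pref] at h1
  have h2 : t + i - t = i := by omega
  rw [h2, getD_Pref hi] at h1
  exact h1

lemma s_step {t : ℕ} (h : ∀ i, i < t → tribWord (t + i) = tribWord i) :
    ∀ i, i < Lf t → tribWord (Lf t + i) = tribWord i := by
  have sq := square_list h
  have himg : Pref (Lf (t+t)) = Pref (Lf t) ++ Pref (Lf t) := by
    rw [← flatMap_Pref, sq, List.flatMap_append, flatMap_Pref]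
  have hlen : Lf (t+t) = Lf t + Lf t := by
    have := congrArg List.length himg
    simpa [length_Pref] using this
  apply square_pointwise
  rw [← hlen]
  exact himg

lemma trib_five : trib 5 = 7 := by decide

lemma s7 : ∀ i, i < 7 → tribWord (7 + i) = tribWord i := by decide

lemma spos : ∀ n, 5 ≤ n → ∀ i, i < trib n → tribWord (trib n + i) = tribWord i := by
  intro n hn
  induction n, hn using Nat.le_induction with
  | base => rw [trib_five]; exact s7
  | succ n hn5 ih =>
    obtain ⟨kk, hkk⟩ : ∃ kk, n = kk + 2 := ⟨n - 2, by omega⟩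
    have := s_step ih
    rw [hkk, Lf_trib] at this
    rw [hkk]
    exact this

-- small letter values
lemma tvals : tribWord 0 = 0 ∧ tribWord 1 = 1 ∧ tribWord 3 = 2 ∧ tribWord 5 = 1 ∧
    tribWord 7 = 0 := by decide

lemma Lf_three : Lf 3 = 6 := by
  have h2 : tribWord 2 = 0 := by decide
  have h1 : tribWord 1 = 1 := by decide
  rw [show (3:ℕ) = 2 + 1 from rfl, Lf_succ, show (2:ℕ) = 1 + 1 from rfl, Lf_succ,
    Lf_one, h1, h2]
  simp [tribMap]

lemma nocube : ∀ m, 4 ≤ m → ¬(∀ i, i < 2*m - 3 → tribWord (m + i) = tribWord i) := by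
  intro m
  induction m using Nat.strong_induction_on with
  | _ m ih =>
    intro hm H
    obtain ⟨ht0, ht1, ht3, ht5, ht7⟩ := tvals
    rcases Nat.lt_or_ge m 7 with h7|h7
    · interval_cases m
      · have := H 3 (by omega); rw [show (4+3 : ℕ) = 7 from rfl, ht7, ht3] at this; omega
      · have := H 0 (by omega); rw [Nat.add_zero, ht5, ht0] at this; omega
      · have := H 1 (by omega); rw [show (6+1 : ℕ) = 7 from rfl, ht7, ht1] at this; omega
    · have HN : ∀ i, i < m - 1 → tribWord (m + i) = tribWord i := by
        intro i hi; exact H i (by omega)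
      obtain ⟨e, he1, helt, heq, _⟩ := n_descent (by omega) HN
      have H' : ∀ i, i < 2*m - 3 → tribWord (Lf e + i) = tribWord i := by
        intro i hi; rw [← heq]; exact H i hi
      have he4 : 4 ≤ e := by
        by_contra hcon
        have : Lf e ≤ Lf 3 := Lf_mono.monotone (by omega)
        rw [Lf_three] at this; omega
      have hLe : Lf e = m := heq.symm
      apply ih e helt he4
      intro j hj
      rcases le_or_gt j e with hc|hc
      · have hLj : Lf j ≤ m := by rw [← hLe]; exact Lf_mono.monotone hc
        exact (propg H' j (by omega)).2
      · have ht : j - e ≤ e - 4 := by omega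
        have hLt : Lf (j - e) ≤ m := by
          rw [← hLe]; exact Lf_mono.monotone (by omega)
        obtain ⟨hLadd, _⟩ := propg H' (j - e) (by omega)
        have hje : e + (j - e) = j := by omega
        rw [hje] at hLadd
        have hgap : Lf (j - e) + 6 ≤ Lf e := by
          have h1 : Lf (j - e) ≤ Lf (e - 4) := Lf_mono.monotone ht
          have h2 : Lf (e - 4) + 6 ≤ Lf (e - 4 + 4) := gap4 (e - 4)
          have h3 : e - 4 + 4 = e := by omega
          rw [h3] at h2; omega
        exact (propg H' j (by omega)).2

-- refutations of small squares
lemma not_s_small {d : ℕ} (hd : d = 1 ∨ d = 2 ∨ d = 4)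
    (H : ∀ i, i < d → tribWord (d + i) = tribWord i) : False := by
  obtain ⟨ht0, ht1, ht3, ht5, ht7⟩ := tvals
  rcases hd with rfl|rfl|rfl
  · have := H 0 (by omega); rw [Nat.add_zero, ht1, ht0] at this; omega
  · have := H 1 (by omega); rw [show (2+1:ℕ) = 3 from rfl, ht3, ht1] at this; omega
  · have := H 3 (by omega); rw [show (4+3:ℕ) = 7 from rfl, ht7, ht3] at this; omega

lemma trib_mono_succ : ∀ n, 2 ≤ n → trib n ≤ trib (n+1) := by
  intro n hn
  obtain ⟨k, rfl⟩ : ∃ k, n = k + 2 := ⟨n - 2, by omega⟩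
  show trib (k+2) ≤ trib (k+3)
  have : trib (k+3) = trib (k+2) + trib (k+1) + trib k := rfl
  omega

lemma trib_ge7 : ∀ n, 5 ≤ n → 7 ≤ trib n := by
  intro n hn
  induction n, hn using Nat.le_induction with
  | base => decide
  | succ n hn5 ih =>
    have := trib_mono_succ n (by omega); omega

/-- The prefixes of the Tribonacci word that are integer powers are exactly those of
length `2·T_n` for `n ≥ 5`. -/
theorem tribWord_prefix_powers (m : ℕ) :
    (∃ (x : List ℕ) (k : ℕ), x ≠ [] ∧ 2 ≤ k ∧
        (List.range m).map tribWord = (List.replicate k x).flatten) ↔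
      ∃ n ≥ 5, m = 2 * trib n := by
  constructor
  · rintro ⟨x, k, hx, hk, heq⟩
    have hPm : Pref m = (List.replicate k x).flatten := heq
    set d := x.length with hd_def
    have hd : 1 ≤ d := by
      rw [hd_def]; exact List.length_pos_iff.mpr hx
    have hm : m = k * d := by
      have hlen := congrArg List.length hPm
      rw [length_Pref] at hlen
      simpa [List.length_flatten, List.map_replicate, List.sum_replicate,
        smul_eq_mul] using hlen
    have h2d : 2 * d ≤ k * d := Nat.mul_le_mul_right d hk
    obtain ⟨k', rfl⟩ : ∃ k', k = k' + 1 := ⟨k - 1, by omega⟩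
    have hA : (List.replicate (k'+1) x).flatten = x ++ (List.replicate k' x).flatten := by
      simp [List.replicate_succ]
    have hB : (List.replicate (k'+1) x).flatten = (List.replicate k' x).flatten ++ x := by
      rw [List.replicate_succ', List.flatten_append]
      simp
    have hlenF : ((List.replicate k' x).flatten).length = m - d := by
      have : ((List.replicate k' x).flatten).length = k' * d := by
        simp [List.length_flatten, List.map_replicate, List.sum_replicate, smul_eq_mul, hd_def]
      rw [this, hm, Nat.succ_mul]; omega
    have hper : ∀ j, j < m - d → tribWord (d + j) = tribWord j := by
      intro j hj
      have hdm : d + j < m := by omega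
      have h1 : tribWord (d + j) = (Pref m).getD (d+j) 0 := (getD_Pref hdm).symm
      rw [hPm, hA, List.getD_append_right _ _ _ _ (by omega)] at h1
      have hij : d + j - x.length = j := by omega
      rw [hij] at h1
      have h2 : ((List.replicate k' x).flatten).getD j 0
          = ((List.replicate k' x).flatten ++ x).getD j 0 := by
        rw [List.getD_append _ _ _ _ (by omega)]
      rw [h2, ← hB, ← hPm, getD_Pref (by omega)] at h1
      exact h1
    have hS : ∀ i, i < d → tribWord (d + i) = tribWord i := by
      intro i hi; exact hper i (by omega)
    obtain ⟨n, hn2, hdn⟩ := nclass d hd (fun i hi => hS i (by omega))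
    have hn5 : 5 ≤ n := by
      by_contra hcon
      push_neg at hcon
      interval_cases n
      · exact not_s_small (Or.inl (hdn.trans (by decide))) hS
      · exact not_s_small (Or.inr (Or.inl (hdn.trans (by decide)))) hS
      · exact not_s_small (Or.inr (Or.inr (hdn.trans (by decide)))) hS
    have hd7 : 7 ≤ d := by rw [hdn]; exact trib_ge7 n hn5
    have hk2 : k' + 1 = 2 := by
      by_contra hcon
      have hk3 : 3 ≤ k' + 1 := by omega
      apply nocube d (by omega)
      intro i hi
      apply hper i
      have : 3 * d ≤ (k'+1) * d := Nat.mul_le_mul_right d hk3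
      omega
    exact ⟨n, hn5, by rw [hm, hk2, hdn]⟩
  · rintro ⟨n, hn5, rfl⟩
    refine ⟨Pref (trib n), 2, ?_, le_refl 2, ?_⟩
    · intro hcon
      have h1 := length_Pref (trib n)
      rw [hcon] at h1
      have := trib_ge7 n hn5
      simp at h1
      omega
    · show Pref (2 * trib n) = _
      have h2 : 2 * trib n = trib n + trib n := by ring
      rw [h2, square_list (spos n hn5)]
      simp [List.replicate_succ]
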